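/- Define the symbols 𝒜(k) = [[1, −c+2k², k²],[τk², 1, 0],[0, k², 1]] and 𝒫(k) = [[1, 2k² − k⁴, 0],[τk², 1 − δk² + δk⁴, 0],[0, k², 1]] with δ = √τ and c = 3ψ̄² + 1 + r. If det 𝒫(k) ≠ 0, then the eigenvalues of 𝒬(k) = 𝒜(k)·𝒫(k)⁻¹ are {1, 1, (τ(k⁶ − 2k⁴ + c k²) + 1)/(τk⁶ + (√τ − 2τ)k⁴ − √τ k² + 1)}. -/

import Mathlib

set_option maxHeartbeats 1000000 in
theorem stmt_17 (τ r ψ k : ℝ) (hτ : 0 < τ) :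
    let δ : ℝ := Real.sqrt τ
    let c : ℝ := 3 * ψ ^ 2 + 1 + r
    let A : Matrix (Fin 3) (Fin 3) ℝ :=
      !![1, -c + 2 * k ^ 2, k ^ 2; τ * k ^ 2, 1, 0; 0, k ^ 2, 1]
    let P : Matrix (Fin 3) (Fin 3) ℝ :=
      !![1, 2 * k ^ 2 - k ^ 4, 0; τ * k ^ 2, 1 - δ * k ^ 2 + δ * k ^ 4, 0; 0, k ^ 2, 1]
    let E : ℝ := (τ * (k ^ 6 - 2 * k ^ 4 + c * k ^ 2) + 1) /
      (τ * k ^ 6 + (Real.sqrt τ - 2 * τ) * k ^ 4 - Real.sqrt τ * k ^ 2 + 1)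
    P.det ≠ 0 →
      (∀ lam : ℝ, (A - lam • P).det = P.det * (1 - lam) ^ 2 * (E - lam)) ∧
      spectrum ℝ (A * P⁻¹) = {1, E} := by
  intro δ c A P E hP
  have hδ : τ = δ ^ 2 := (Real.sq_sqrt hτ.le).symm
  have hDet : P.det = τ * k ^ 6 + (δ - 2 * τ) * k ^ 4 - δ * k ^ 2 + 1 := by
    simp [P, Matrix.det_fin_three]
    ring
  have hD : τ * k ^ 6 + (Real.sqrt τ - 2 * τ) * k ^ 4 - Real.sqrt τ * k ^ 2 + 1 ≠ 0 := by
    rw [← hDet]; exact hP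
  have key : ∀ lam : ℝ, (A - lam • P).det = P.det * (1 - lam) ^ 2 * (E - lam) := by
    intro lam
    have h1 : (A - lam • P).det =
        (1 - lam) * ((1 - lam * (1 - δ * k ^ 2 + δ * k ^ 4)) * (1 - lam))
        - (-c + 2 * k ^ 2 - lam * (2 * k ^ 2 - k ^ 4)) * ((τ * k ^ 2 - lam * (τ * k ^ 2)) * (1 - lam))
        + k ^ 2 * ((τ * k ^ 2 - lam * (τ * k ^ 2)) * (k ^ 2 - lam * k ^ 2)) := by
      rw [Matrix.det_fin_three]
      simp [A, P, Matrix.sub_apply, Matrix.smul_apply]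
      ring
    rw [h1, hDet]
    show _ = _ * _ * ((τ * (k ^ 6 - 2 * k ^ 4 + c * k ^ 2) + 1) /
      (τ * k ^ 6 + (Real.sqrt τ - 2 * τ) * k ^ 4 - Real.sqrt τ * k ^ 2 + 1) - lam)
    rw [show Real.sqrt τ = δ from rfl]
    have hD' : τ * k ^ 6 + (δ - 2 * τ) * k ^ 4 - δ * k ^ 2 + 1 ≠ 0 := hD
    rw [hδ] at hD' ⊢
    linear_combination (-(1 - lam) ^ 2 * (δ ^ 2 * (k ^ 6 - 2 * k ^ 4 + c * k ^ 2) + 1)) * mul_inv_cancel₀ hD'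
  refine ⟨key, ?_⟩
  have hPu : IsUnit P.det := isUnit_iff_ne_zero.mpr hP
  ext lam
  simp only [Set.mem_insert_iff, Set.mem_singleton_iff]
  rw [spectrum.mem_iff]
  have hfac : (algebraMap ℝ (Matrix (Fin 3) (Fin 3) ℝ)) lam - A * P⁻¹ = (lam • P - A) * P⁻¹ := by
    rw [Algebra.algebraMap_eq_smul_one, Matrix.sub_mul, Matrix.smul_mul,
      Matrix.mul_nonsing_inv P hPu]
  have h3 : (lam • P - A).det = -(P.det * (1 - lam) ^ 2 * (E - lam)) := by
    rw [show lam • P - A = -(A - lam • P) from by abel, Matrix.det_neg, Fintype.card_fin, key lam]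
    ring
  have hinv : (Ring.inverse P.det : ℝ) ≠ 0 := by
    rw [Ring.inverse_eq_inv]
    exact inv_ne_zero hP
  rw [hfac, Matrix.isUnit_iff_isUnit_det, Matrix.det_mul, Matrix.det_nonsing_inv, h3]
  simp only [isUnit_iff_ne_zero, not_not, neg_mul, neg_eq_zero, mul_eq_zero, hinv, hP,
    or_false, false_or, pow_eq_zero_iff (two_ne_zero), sub_eq_zero]
  exact or_congr eq_comm eq_comm
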